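/- arXiv:1202.1208 — 4 statements merged into one kernel-verified Lean document; each statement's English description precedes it below -/
import Mathlib

section
/- Let R : V ⇝ V be a linear relation on a module with associated submodules K±, D±, D = D₋ ∩ D₊ as above. The natural inclusion induces a canonical isomorphism of modules D/((K₋+K₊) ∩ D) ≅ ((K₋+D₊) ∩ (D₋+K₊))/(K₋+K₊). -/
variable {A V : Type*} [CommRing A] [AddCommGroup V] [Module A V]

/-- `K₊`: elements admitting a finite forward `R`-chain ending at `0`:
`v R v₁ R v₂ R ⋯ R v_k R 0`. -/
def KplusSet (R : Submodule A (V × V)) : Set V :=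
  {v | ∃ (n : ℕ) (c : ℕ → V), c 0 = v ∧ c (n + 1) = 0 ∧ ∀ i ≤ n, (c i, c (i + 1)) ∈ R}

/-- `K₋`: elements reached from `0` by a finite forward `R`-chain:
`0 R v_{-k} R ⋯ R v_{-1} R v`. -/
def KminusSet (R : Submodule A (V × V)) : Set V :=
  {v | ∃ (n : ℕ) (c : ℕ → V), c 0 = 0 ∧ c (n + 1) = v ∧ ∀ i ≤ n, (c i, c (i + 1)) ∈ R}

/-- `D₊`: elements admitting an infinite forward `R`-chain `v R v₁ R v₂ R ⋯`. -/
def DplusSet (R : Submodule A (V × V)) : Set V :=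
  {v | ∃ c : ℕ → V, c 0 = v ∧ ∀ i, (c i, c (i + 1)) ∈ R}

/-- `D₋`: elements admitting an infinite backward `R`-chain `⋯ R v₂ R v₁ R v`. -/
def DminusSet (R : Submodule A (V × V)) : Set V :=
  {v | ∃ c : ℕ → V, c 0 = v ∧ ∀ i, (c (i + 1), c i) ∈ R}

/-- For a linear relation `R : V ⇝ V` on a module, with submodules `K₋, K₊, D₋, D₊` as above
and `D = D₋ ⊓ D₊`, the natural inclusion induces an isomorphism
`D / ((K₋ + K₊) ⊓ D) ≅ ((K₋ + D₊) ⊓ (D₋ + K₊)) / (K₋ + K₊)`. -/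
theorem stmt4 (R : Submodule A (V × V)) (Km Kp Dm Dp : Submodule A V)
    (hKm : (Km : Set V) = KminusSet R) (hKp : (Kp : Set V) = KplusSet R)
    (hDm : (Dm : Set V) = DminusSet R) (hDp : (Dp : Set V) = DplusSet R) :
    ∃ e : (↥(Dm ⊓ Dp) ⧸ ((Km ⊔ Kp) ⊓ (Dm ⊓ Dp)).comap (Dm ⊓ Dp).subtype) ≃ₗ[A]
        (↥((Km ⊔ Dp) ⊓ (Dm ⊔ Kp)) ⧸ (Km ⊔ Kp).comap ((Km ⊔ Dp) ⊓ (Dm ⊔ Kp)).subtype),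
      ∀ x : ↥(Dm ⊓ Dp),
        e (Submodule.Quotient.mk x) =
          Submodule.Quotient.mk (Submodule.inclusion
            (le_inf (inf_le_right.trans le_sup_right) (inf_le_left.trans le_sup_left)) x) := by
  have hKpDp : Kp ≤ Dp := by
    intro v hv
    rw [← SetLike.mem_coe, hKp] at hv
    rw [← SetLike.mem_coe, hDp]
    obtain ⟨n, c, hc0, hcn, hchain⟩ := hv
    refine ⟨fun i => if i ≤ n + 1 then c i else 0, by simp [hc0], fun i => ?_⟩
    beta_reduce
    rcases lt_trichotomy i (n + 1) with h | h | h
    · have h1 : i ≤ n := Nat.lt_succ_iff.mp h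
      rw [if_pos (by omega : i ≤ n + 1), if_pos (by omega : i + 1 ≤ n + 1)]
      exact hchain i h1
    · subst h
      simp [hcn]
      exact R.zero_mem
    · rw [if_neg (by omega : ¬ i ≤ n + 1), if_neg (by omega : ¬ i + 1 ≤ n + 1)]
      exact R.zero_mem
  have hKmDm : Km ≤ Dm := by
    intro v hv
    rw [← SetLike.mem_coe, hKm] at hv
    rw [← SetLike.mem_coe, hDm]
    obtain ⟨n, c, hc0, hcn, hchain⟩ := hv
    refine ⟨fun i => if i ≤ n + 1 then c (n + 1 - i) else 0, by simp [hcn], fun i => ?_⟩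
    beta_reduce
    rcases lt_trichotomy i (n + 1) with h | h | h
    · have h1 : i ≤ n := Nat.lt_succ_iff.mp h
      rw [if_pos (by omega : i + 1 ≤ n + 1), if_pos (by omega : i ≤ n + 1)]
      have h3 : n + 1 - i = (n - i) + 1 := by omega
      have h4 : n + 1 - (i + 1) = n - i := by omega
      rw [h3, h4]
      exact hchain (n - i) (by omega)
    · subst h
      simp [hc0]
      exact R.zero_mem
    · rw [if_neg (by omega : ¬ i + 1 ≤ n + 1), if_neg (by omega : ¬ i ≤ n + 1)]
      exact R.zero_mem
  have key : (Km ⊔ Dp) ⊓ (Dm ⊔ Kp) = (Dm ⊓ Dp) ⊔ (Km ⊔ Kp) := by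
    apply le_antisymm
    · rintro v hv
      obtain ⟨hv1, hv2⟩ := Submodule.mem_inf.mp hv
      rw [Submodule.mem_sup] at hv1 hv2
      obtain ⟨a, ha, b, hb, hab⟩ := hv1
      obtain ⟨c, hc, d, hd, hcd⟩ := hv2
      have hmem : v - a - d ∈ Dm ⊓ Dp := by
        constructor
        · have : v - a - d = c - a := by rw [← hcd]; abel
          rw [this]
          exact Dm.sub_mem hc (hKmDm ha)
        · have : v - a - d = b - d := by rw [← hab]; abel
          rw [this]
          exact Dp.sub_mem hb (hKpDp hd)
      rw [Submodule.mem_sup]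
      refine ⟨v - a - d, hmem, a + d, Submodule.mem_sup.mpr ⟨a, ha, d, hd, rfl⟩, by abel⟩
    · refine sup_le (le_inf (le_sup_of_le_right inf_le_right)
        (le_sup_of_le_left inf_le_left)) (sup_le ?_ ?_)
      · exact le_inf le_sup_left (le_sup_of_le_left hKmDm)
      · exact le_inf (le_sup_of_le_right hKpDp) le_sup_right
  set D := Dm ⊓ Dp
  set K := Km ⊔ Kp
  have hmap : (K.comap (D ⊔ K).subtype).map
      (LinearEquiv.ofEq (D ⊔ K) ((Km ⊔ Dp) ⊓ (Dm ⊔ Kp)) key.symm).toLinearMap =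
      K.comap ((Km ⊔ Dp) ⊓ (Dm ⊔ Kp)).subtype := by
    ext x
    simp only [Submodule.mem_map, Submodule.mem_comap, Submodule.coe_subtype]
    constructor
    · rintro ⟨y, hy, rfl⟩
      simpa using hy
    · intro hx
      exact ⟨⟨x, key ▸ x.2⟩, hx, by ext; simp⟩
  refine ⟨(Submodule.quotEquivOfEq ((K ⊓ D).comap D.subtype) ((D ⊓ K).comap D.subtype)
      (by rw [inf_comm])).trans
    ((LinearMap.quotientInfEquivSupQuotient D K).trans
      (Submodule.Quotient.equiv _ _ (LinearEquiv.ofEq _ _ key.symm) hmap)), fun x => rfl⟩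
end

section
/- Let R : V ⇝ V be a linear relation on a module, and set V_reg = D/((K₋+K₊) ∩ D). The induced relation R_reg on V_reg, defined by declaring two classes related iff they admit representatives in D related by R, is (the graph of) a module isomorphism of V_reg. -/
variable {A V : Type*} [CommRing A] [AddCommGroup V] [Module A V]

section Aux

variable (R : Submodule A (V × V))

lemma zero_mem_KplusSet : (0 : V) ∈ KplusSet R :=
  ⟨0, fun _ => 0, rfl, rfl, fun _ _ => by exact R.zero_mem⟩

lemma zero_mem_KminusSet : (0 : V) ∈ KminusSet R :=
  ⟨0, fun _ => 0, rfl, rfl, fun _ _ => by exact R.zero_mem⟩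

/-- A member of `K₊` has a successor in `K₊`. -/
lemma succ_KplusSet {k : V} (hk : k ∈ KplusSet R) :
    ∃ a ∈ KplusSet R, (k, a) ∈ R := by
  obtain ⟨n, c, h0, hn, hc⟩ := hk
  refine ⟨c 1, ?_, by rw [← h0]; exact hc 0 (Nat.zero_le n)⟩
  cases n with
  | zero => rw [show c 1 = 0 from hn]; exact zero_mem_KplusSet R
  | succ m =>
    exact ⟨m, fun i => c (i + 1), rfl, hn, fun i hi => hc (i + 1) (by omega)⟩

/-- A member of `K₋` has a predecessor in `K₋`. -/
lemma pred_KminusSet {k : V} (hk : k ∈ KminusSet R) :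
    ∃ a ∈ KminusSet R, (a, k) ∈ R := by
  obtain ⟨n, c, h0, hn, hc⟩ := hk
  refine ⟨c n, ?_, by rw [← hn]; exact hc n le_rfl⟩
  cases n with
  | zero => rw [show c 0 = 0 from h0]; exact zero_mem_KminusSet R
  | succ m => exact ⟨m, c, h0, rfl, fun i hi => hc i (by omega)⟩

/-- `K₋` is stable under taking `R`-successors. -/
lemma KminusSet_step {k w : V} (hk : k ∈ KminusSet R) (hkw : (k, w) ∈ R) :
    w ∈ KminusSet R := by
  obtain ⟨n, c, h0, hn, hc⟩ := hk
  refine ⟨n + 1, fun i => if i ≤ n + 1 then c i else w, by simpa using h0,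
    by dsimp only; rw [if_neg (by omega)], fun i hi => ?_⟩
  dsimp only
  rcases Nat.lt_or_ge i (n + 1) with h | h
  · rw [if_pos (by omega), if_pos (by omega)]
    exact hc i (by omega)
  · have hi' : i = n + 1 := by omega
    subst hi'
    rw [if_pos le_rfl, if_neg (by omega), hn]
    exact hkw

/-- `K₊` is stable under taking `R`-predecessors. -/
lemma KplusSet_step {k w : V} (hk : k ∈ KplusSet R) (hwk : (w, k) ∈ R) :
    w ∈ KplusSet R := by
  obtain ⟨n, c, h0, hn, hc⟩ := hk
  refine ⟨n + 1, fun i => match i with | 0 => w | (j + 1) => c j, rfl, hn, fun i hi => ?_⟩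
  match i with
  | 0 => simpa [h0] using hwk
  | (j + 1) => exact hc j (by omega)

/-- Every member of `D = D₋ ⊓ D₊` has an `R`-successor in `D`. -/
lemma D_succ {d : V} (hdm : d ∈ DminusSet R) (hdp : d ∈ DplusSet R) :
    ∃ d' : V, d' ∈ DminusSet R ∧ d' ∈ DplusSet R ∧ (d, d') ∈ R := by
  obtain ⟨c, hc0, hc⟩ := hdp
  obtain ⟨b, hb0, hb⟩ := hdm
  refine ⟨c 1, ⟨fun i => match i with | 0 => c 1 | (j + 1) => b j, rfl, fun i => ?_⟩,
    ⟨fun i => c (i + 1), rfl, fun i => hc (i + 1)⟩, by rw [← hc0]; exact hc 0⟩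
  match i with
  | 0 => simpa [hb0, hc0] using hc 0
  | (j + 1) => exact hb j

/-- Every member of `D = D₋ ⊓ D₊` has an `R`-predecessor in `D`. -/
lemma D_pred {d : V} (hdm : d ∈ DminusSet R) (hdp : d ∈ DplusSet R) :
    ∃ d' : V, d' ∈ DminusSet R ∧ d' ∈ DplusSet R ∧ (d', d) ∈ R := by
  obtain ⟨c, hc0, hc⟩ := hdp
  obtain ⟨b, hb0, hb⟩ := hdm
  refine ⟨b 1, ⟨fun i => b (i + 1), rfl, fun i => hb (i + 1)⟩,
    ⟨fun i => match i with | 0 => b 1 | (j + 1) => c j, rfl, fun i => ?_⟩,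
    by rw [← hb0]; exact hb 0⟩
  match i with
  | 0 => simpa [hb0, hc0] using hb 0
  | (j + 1) => exact hc j

end Aux

/-- For a linear relation `R : V ⇝ V` on a module, the induced relation `R_reg` on
`V_reg = D / ((K₋ + K₊) ⊓ D)` — two classes are related iff they have representatives in `D`
related by `R` — is the graph of a module isomorphism of `V_reg`. -/
theorem stmt5 (R : Submodule A (V × V)) (Km Kp Dm Dp : Submodule A V)
    (hKm : (Km : Set V) = KminusSet R) (hKp : (Kp : Set V) = KplusSet R)
    (hDm : (Dm : Set V) = DminusSet R) (hDp : (Dp : Set V) = DplusSet R) :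
    ∃ e : (↥(Dm ⊓ Dp) ⧸ ((Km ⊔ Kp) ⊓ (Dm ⊓ Dp)).comap (Dm ⊓ Dp).subtype) ≃ₗ[A]
        (↥(Dm ⊓ Dp) ⧸ ((Km ⊔ Kp) ⊓ (Dm ⊓ Dp)).comap (Dm ⊓ Dp).subtype),
      ∀ x y : (↥(Dm ⊓ Dp) ⧸ ((Km ⊔ Kp) ⊓ (Dm ⊓ Dp)).comap (Dm ⊓ Dp).subtype),
        ((∃ d d' : ↥(Dm ⊓ Dp), Submodule.Quotient.mk d = x ∧ Submodule.Quotient.mk d' = y ∧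
            ((d : V), (d' : V)) ∈ R) ↔ e x = y) := by
  classical
  set Q := (↥(Dm ⊓ Dp) ⧸ ((Km ⊔ Kp) ⊓ (Dm ⊓ Dp)).comap (Dm ⊓ Dp).subtype) with hQ
  let mkq : ↥(Dm ⊓ Dp) →ₗ[A] Q := (((Km ⊔ Kp) ⊓ (Dm ⊓ Dp)).comap (Dm ⊓ Dp).subtype).mkQ
  let S : Submodule A (Q × Q) :=
    Submodule.map (mkq.prodMap mkq)
      (R.comap ((Dm ⊓ Dp).subtype.prodMap (Dm ⊓ Dp).subtype))
  have memS : ∀ x y : Q, (x, y) ∈ S ↔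
      ∃ d d' : ↥(Dm ⊓ Dp), Submodule.Quotient.mk d = x ∧ Submodule.Quotient.mk d' = y ∧
        ((d : V), (d' : V)) ∈ R := by
    intro x y
    constructor
    · rintro ⟨⟨d, d'⟩, hmem, heq⟩
      rw [Prod.ext_iff] at heq
      exact ⟨d, d', heq.1, heq.2, hmem⟩
    · rintro ⟨d, d', hx, hy, h⟩
      exact ⟨(d, d'), h, by exact Prod.ext hx hy⟩
  have mk_eq_zero : ∀ d : ↥(Dm ⊓ Dp),
      (Submodule.Quotient.mk d : Q) = 0 ↔ (d : V) ∈ Km ⊔ Kp := by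
    intro d
    rw [Submodule.Quotient.mk_eq_zero, Submodule.mem_comap, Submodule.mem_inf]
    exact ⟨fun h => h.1, fun h => ⟨h, d.2⟩⟩
  have hDmem : ∀ v : V, v ∈ Dm ⊓ Dp ↔ v ∈ DminusSet R ∧ v ∈ DplusSet R := by
    intro v
    rw [Submodule.mem_inf]
    constructor
    · rintro ⟨h1, h2⟩
      have h1' : v ∈ (Dm : Set V) := h1
      have h2' : v ∈ (Dp : Set V) := h2
      rw [hDm] at h1'; rw [hDp] at h2'
      exact ⟨h1', h2'⟩
    · rintro ⟨h1, h2⟩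
      constructor
      · show v ∈ (Dm : Set V); rw [hDm]; exact h1
      · show v ∈ (Dp : Set V); rw [hDp]; exact h2
  have Kfwd : ∀ {k w : V}, k ∈ Km ⊔ Kp → (k, w) ∈ R → w ∈ Km ⊔ Kp := by
    intro k w hk hkw
    obtain ⟨km, hkm, kp, hkp, rfl⟩ := Submodule.mem_sup.mp hk
    have hkp' : kp ∈ (Kp : Set V) := hkp
    have hkm' : km ∈ (Km : Set V) := hkm
    rw [hKp] at hkp'; rw [hKm] at hkm'
    obtain ⟨a, ha, hka⟩ := succ_KplusSet R hkp'
    have h2 : (km, w - a) ∈ R := by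
      have h := R.sub_mem hkw hka
      simpa [Prod.sub_def] using h
    have h3 : w - a ∈ KminusSet R := KminusSet_step R hkm' h2
    refine Submodule.mem_sup.mpr ⟨w - a, ?_, a, ?_, by abel⟩
    · show w - a ∈ (Km : Set V); rw [hKm]; exact h3
    · show a ∈ (Kp : Set V); rw [hKp]; exact ha
  have Kbwd : ∀ {k w : V}, k ∈ Km ⊔ Kp → (w, k) ∈ R → w ∈ Km ⊔ Kp := by
    intro k w hk hwk
    obtain ⟨km, hkm, kp, hkp, rfl⟩ := Submodule.mem_sup.mp hk
    have hkp' : kp ∈ (Kp : Set V) := hkp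
    have hkm' : km ∈ (Km : Set V) := hkm
    rw [hKp] at hkp'; rw [hKm] at hkm'
    obtain ⟨a, ha, hak⟩ := pred_KminusSet R hkm'
    have h2 : (w - a, kp) ∈ R := by
      have h := R.sub_mem hwk hak
      simpa [Prod.sub_def] using h
    have h3 : w - a ∈ KplusSet R := KplusSet_step R hkp' h2
    refine Submodule.mem_sup.mpr ⟨a, ?_, w - a, ?_, by abel⟩
    · show a ∈ (Km : Set V); rw [hKm]; exact ha
    · show w - a ∈ (Kp : Set V); rw [hKp]; exact h3
  have htot : ∀ x : Q, ∃ y : Q, (x, y) ∈ S := by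
    intro x
    obtain ⟨d, rfl⟩ := Submodule.Quotient.mk_surjective _ x
    obtain ⟨h1, h2⟩ := (hDmem d).mp d.2
    obtain ⟨d', hd1, hd2, hR⟩ := D_succ R h1 h2
    exact ⟨Submodule.Quotient.mk ⟨d', (hDmem d').mpr ⟨hd1, hd2⟩⟩,
      (memS _ _).mpr ⟨d, ⟨d', (hDmem d').mpr ⟨hd1, hd2⟩⟩, rfl, rfl, hR⟩⟩
  have hsur : ∀ y : Q, ∃ x : Q, (x, y) ∈ S := by
    intro y
    obtain ⟨d, rfl⟩ := Submodule.Quotient.mk_surjective _ y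
    obtain ⟨h1, h2⟩ := (hDmem d).mp d.2
    obtain ⟨d', hd1, hd2, hR⟩ := D_pred R h1 h2
    exact ⟨Submodule.Quotient.mk ⟨d', (hDmem d').mpr ⟨hd1, hd2⟩⟩,
      (memS _ _).mpr ⟨⟨d', (hDmem d').mpr ⟨hd1, hd2⟩⟩, d, rfl, rfl, hR⟩⟩
  have hzero_r : ∀ y : Q, ((0 : Q), y) ∈ S → y = 0 := by
    intro y h
    obtain ⟨d, d', hd0, hdy, hR⟩ := (memS _ _).mp h
    have hK : (d : V) ∈ Km ⊔ Kp := (mk_eq_zero d).mp hd0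
    rw [← hdy, mk_eq_zero]
    exact Kfwd hK hR
  have hzero_l : ∀ x : Q, (x, (0 : Q)) ∈ S → x = 0 := by
    intro x h
    obtain ⟨d, d', hdx, hd0, hR⟩ := (memS _ _).mp h
    have hK : (d' : V) ∈ Km ⊔ Kp := (mk_eq_zero d').mp hd0
    rw [← hdx, mk_eq_zero]
    exact Kbwd hK hR
  have huniq : ∀ {x y y' : Q}, (x, y) ∈ S → (x, y') ∈ S → y = y' := by
    intro x y y' h1 h2
    have h3 : ((0 : Q), y - y') ∈ S := by
      have h := S.sub_mem h1 h2
      simpa [Prod.sub_def] using h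
    exact sub_eq_zero.mp (hzero_r _ h3)
  have huniq' : ∀ {x x' y : Q}, (x, y) ∈ S → (x', y) ∈ S → x = x' := by
    intro x x' y h1 h2
    have h3 : (x - x', (0 : Q)) ∈ S := by
      have h := S.sub_mem h1 h2
      simpa [Prod.sub_def] using h
    exact sub_eq_zero.mp (hzero_l _ h3)
  choose f₀ hf₀ using htot
  have hadd : ∀ x y : Q, f₀ (x + y) = f₀ x + f₀ y := fun x y =>
    huniq (hf₀ (x + y)) (by simpa [Prod.mk_add_mk] using S.add_mem (hf₀ x) (hf₀ y))
  have hsmul : ∀ (a : A) (x : Q), f₀ (a • x) = a • f₀ x := fun a x =>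
    huniq (hf₀ (a • x)) (by simpa [Prod.smul_mk] using S.smul_mem a (hf₀ x))
  let f : Q →ₗ[A] Q := { toFun := f₀, map_add' := hadd, map_smul' := hsmul }
  have hinj : Function.Injective f := by
    intro x x' h
    have h' : f₀ x = f₀ x' := h
    exact huniq' (h' ▸ hf₀ x) (hf₀ x')
  have hsurj : Function.Surjective f := by
    intro y
    obtain ⟨x, hx⟩ := hsur y
    exact ⟨x, huniq (hf₀ x) hx⟩
  refine ⟨LinearEquiv.ofBijective f ⟨hinj, hsurj⟩, fun x y => ?_⟩
  have he : LinearEquiv.ofBijective f ⟨hinj, hsurj⟩ x = f₀ x := rfl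
  constructor
  · intro h
    rw [he]
    exact huniq (hf₀ x) ((memS x y).mpr h)
  · intro h
    rw [he] at h
    exact (memS x y).mp (h ▸ hf₀ x)
end

section
/- Let R : V ⇝ V be a linear relation on a finite-dimensional vector space. For every k ≥ 0, the relation induced by the k-fold composite R^k on the quotient D₊/K₊ (via the inclusion D₊ ⊆ V and projection D₊ → D₊/K₊) is a linear isomorphism of D₊/K₊. -/
variable {A V : Type*} [CommRing A] [AddCommGroup V] [Module A V]

/-- Composition of linear relations: `v (rcomp R S) u` iff `∃ w, v R w` and `w S u`. -/
def rcomp {A V W U : Type*} [CommRing A] [AddCommGroup V] [Module A V]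
    [AddCommGroup W] [Module A W] [AddCommGroup U] [Module A U]
    (R : Submodule A (V × W)) (S : Submodule A (W × U)) : Submodule A (V × U) where
  carrier := {p | ∃ w, (p.1, w) ∈ R ∧ (w, p.2) ∈ S}
  add_mem' := by
    rintro a b ⟨w1, h1, h1'⟩ ⟨w2, h2, h2'⟩
    exact ⟨w1 + w2, R.add_mem h1 h2, S.add_mem h1' h2'⟩
  zero_mem' := ⟨0, R.zero_mem, S.zero_mem⟩
  smul_mem' := by
    rintro c a ⟨w, h, h'⟩
    exact ⟨c • w, R.smul_mem c h, S.smul_mem c h'⟩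

/-- The `k`-fold composition `R^k` of a linear relation `R : V ⇝ V` with itself
(`R^0` is the identity relation). -/
def relPow {A V : Type*} [CommRing A] [AddCommGroup V] [Module A V]
    (R : Submodule A (V × V)) : ℕ → Submodule A (V × V)
  | 0 => LinearMap.graph (LinearMap.id : V →ₗ[A] V)
  | n + 1 => rcomp (relPow R n) R

/-- Membership in `relPow R k` is equivalent to existence of a chain of length `k`. -/
lemma relPow_chain (R : Submodule A (V × V)) (k : ℕ) (v w : V) :
    (v, w) ∈ relPow R k ↔ ∃ c : ℕ → V, c 0 = v ∧ c k = w ∧ ∀ i < k, (c i, c (i + 1)) ∈ R := by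
  induction k generalizing w with
  | zero =>
    constructor
    · intro h
      have : w = v := by simpa [relPow, LinearMap.mem_graph_iff] using h
      exact ⟨fun _ => v, rfl, this.symm, by omega⟩
    · rintro ⟨c, h0, hk, _⟩
      have : w = v := by rw [← h0, ← hk]
      simp [relPow, LinearMap.mem_graph_iff, this]
  | succ n ih =>
    constructor
    · rintro ⟨u, hu, huw⟩
      obtain ⟨c, h0, hk, hstep⟩ := (ih u).1 hu
      refine ⟨fun i => if i < n + 1 then c i else w, by simp [h0], by simp, ?_⟩
      intro i hi
      rcases Nat.lt_or_ge (i + 1) (n + 1) with h | h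
      · simpa [Nat.lt_of_succ_lt h, h] using hstep i (by omega)
      · have hi' : i = n := by omega
        subst hi'
        simpa [Nat.lt_succ_self, hk] using huw
    · rintro ⟨c, h0, hk, hstep⟩
      exact ⟨c n, (ih (c n)).2 ⟨c, h0, rfl, fun i hi => hstep i (by omega)⟩,
        by simpa [hk] using hstep n (by omega)⟩

/-- From anything in `D₊` one can go `k` steps and stay in `D₊`. -/
lemma dplus_total (R : Submodule A (V × V)) (k : ℕ) {v : V} (hv : v ∈ DplusSet R) :
    ∃ w ∈ DplusSet R, (v, w) ∈ relPow R k := by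
  obtain ⟨c, h0, hstep⟩ := hv
  refine ⟨c k, ⟨fun i => c (k + i), by simp, fun i => hstep (k + i)⟩, ?_⟩
  exact (relPow_chain R k v (c k)).2 ⟨c, h0, rfl, fun i _ => hstep i⟩

/-- If `v` reaches `w` in `k` steps and `w ∈ K₊`, then `v ∈ K₊`. -/
lemma kplus_pull (R : Submodule A (V × V)) (k : ℕ) {v w : V}
    (hvw : (v, w) ∈ relPow R k) (hw : w ∈ KplusSet R) : v ∈ KplusSet R := by
  obtain ⟨c, hc0, hck, hcstep⟩ := (relPow_chain R k v w).1 hvw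
  obtain ⟨n, c', h0', hend', hstep'⟩ := hw
  refine ⟨k + n, fun i => if i < k then c i else c' (i - k), ?_, ?_, ?_⟩
  · rcases Nat.eq_zero_or_pos k with hk | hk
    · subst hk; simpa [h0', ← hck] using hc0.symm ▸ rfl
    · simp [hk, hc0]
  · have h1 : ¬ k + n + 1 < k := by omega
    have h2 : k + n + 1 - k = n + 1 := by omega
    simp [h1, h2, hend']
  · intro i hi
    rcases Nat.lt_or_ge i k with hik | hik
    · rcases Nat.lt_or_ge (i + 1) k with hik1 | hik1
      · simpa [hik, hik1] using hcstep i hik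
      · have : i + 1 = k := by omega
        have hw' : c' (i + 1 - k) = c (i + 1) := by
          rw [this]; simp [h0', ← hck]
        have : ¬ i + 1 < k := by omega
        have hw'' : c' 0 = c (i + 1) := by rw [← hw']; congr 1; omega
        simpa [hik, this, hw''] using hcstep i hik
    · have h1 : ¬ i < k := by omega
      have h2 : ¬ i + 1 < k := by omega
      have h3 : i + 1 - k = (i - k) + 1 := by omega
      simpa [h1, h2, h3] using hstep' (i - k) (by omega)

/-- For a linear relation `R` on a finite-dimensional vector space and every `k ≥ 0`, the
relation induced by `R^k` on `D₊/K₊` is the graph of a linear isomorphism of `D₊/K₊`. -/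
theorem stmt8 {κ V : Type*} [Field κ] [AddCommGroup V] [Module κ V] [FiniteDimensional κ V]
    (R : Submodule κ (V × V)) (Kp Dp : Submodule κ V)
    (hKp : (Kp : Set V) = KplusSet R) (hDp : (Dp : Set V) = DplusSet R) (k : ℕ) :
    ∃ e : (↥Dp ⧸ Kp.comap Dp.subtype) ≃ₗ[κ] (↥Dp ⧸ Kp.comap Dp.subtype),
      ∀ x y : (↥Dp ⧸ Kp.comap Dp.subtype),
        ((∃ d d' : ↥Dp, Submodule.Quotient.mk d = x ∧ Submodule.Quotient.mk d' = y ∧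
            ((d : V), (d' : V)) ∈ relPow R k) ↔ e x = y) := by
  classical
  set Q : Submodule κ ↥Dp := Kp.comap Dp.subtype with hQ
  set W := ↥Dp ⧸ Q with hW
  let q : ↥Dp →ₗ[κ] W := Q.mkQ
  set S : Submodule κ (W × W) :=
    Submodule.map (q.prodMap q)
      (Submodule.comap (Dp.subtype.prodMap Dp.subtype) (relPow R k)) with hSdef
  have hSmem : ∀ x y : W, (x, y) ∈ S ↔
      ∃ d d' : ↥Dp, Submodule.Quotient.mk d = x ∧ Submodule.Quotient.mk d' = y ∧
        ((d : V), (d' : V)) ∈ relPow R k := by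
    intro x y
    constructor
    · rintro ⟨⟨d, d'⟩, hmem, heq⟩
      simp only [LinearMap.prodMap_apply, Prod.mk.injEq] at heq
      exact ⟨d, d', heq.1, heq.2, hmem⟩
    · rintro ⟨d, d', h1, h2, h3⟩
      refine ⟨(d, d'), h3, ?_⟩
      simp only [LinearMap.prodMap_apply, Prod.mk.injEq]
      exact ⟨h1, h2⟩
  -- totality
  have htot : ∀ x : W, ∃ y : W, (x, y) ∈ S := by
    intro x
    obtain ⟨d, rfl⟩ := Submodule.Quotient.mk_surjective Q x
    have hd : (d : V) ∈ DplusSet R := by rw [← hDp]; exact d.2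
    obtain ⟨w, hwD, hvw⟩ := dplus_total R k hd
    have hwD' : w ∈ Dp := by rw [← hDp] at hwD; exact hwD
    exact ⟨Submodule.Quotient.mk ⟨w, hwD'⟩,
      (hSmem _ _).2 ⟨d, ⟨w, hwD'⟩, rfl, rfl, hvw⟩⟩
  -- injectivity of the relation
  have hinj : ∀ x : W, (x, 0) ∈ S → x = 0 := by
    intro x hx
    obtain ⟨d, d', h1, h2, h3⟩ := (hSmem x 0).1 hx
    have hd'K : (d' : V) ∈ KplusSet R := by
      rw [← hKp]
      exact (Submodule.Quotient.mk_eq_zero Q).1 h2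
    have hdK : (d : V) ∈ KplusSet R := kplus_pull R k h3 hd'K
    rw [← h1, Submodule.Quotient.mk_eq_zero]
    show (d : V) ∈ (Kp : Set V)
    rw [hKp]; exact hdK
  -- dimension counting
  let g1 : ↥S →ₗ[κ] W := (LinearMap.fst κ W W).comp S.subtype
  let g2 : ↥S →ₗ[κ] W := (LinearMap.snd κ W W).comp S.subtype
  have hrange1 : LinearMap.range g1 = ⊤ := by
    rw [eq_top_iff]
    rintro x -
    obtain ⟨y, hy⟩ := htot x
    exact ⟨⟨(x, y), hy⟩, rfl⟩
  have hker2 : LinearMap.ker g2 = ⊥ := by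
    rw [eq_bot_iff]
    rintro ⟨⟨a, b⟩, hab⟩ h
    have hb : b = 0 := h
    subst hb
    have : a = 0 := hinj a hab
    subst this
    simp [Submodule.mem_bot]
  have hd1 := LinearMap.finrank_range_add_finrank_ker g1
  have hd2 := LinearMap.finrank_range_add_finrank_ker g2
  rw [hrange1, finrank_top] at hd1
  rw [hker2, finrank_bot, Nat.add_zero] at hd2
  have hle : Module.finrank κ (LinearMap.range g2) ≤ Module.finrank κ W :=
    Submodule.finrank_le _
  have hrange2 : LinearMap.range g2 = ⊤ := by
    apply Submodule.eq_top_of_finrank_eq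
    omega
  have hker1 : LinearMap.ker g1 = ⊥ := by
    rw [← Submodule.finrank_eq_zero (R := κ) (M := ↥S)]
    rw [hrange2, finrank_top] at hd2
    omega
  -- functionality
  have hfun0 : ∀ y : W, (0, y) ∈ S → y = 0 := by
    intro y hy
    have : (⟨(0, y), hy⟩ : ↥S) ∈ LinearMap.ker g1 := rfl
    rw [hker1, Submodule.mem_bot] at this
    exact congrArg Prod.snd (congrArg Subtype.val this)
  have hfun : ∀ x y y' : W, (x, y) ∈ S → (x, y') ∈ S → y = y' := by
    intro x y y' h h'
    have hsub : ((x, y) - (x, y') : W × W) ∈ S := S.sub_mem h h'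
    have : (0, y - y') ∈ S := by simpa using hsub
    exact sub_eq_zero.1 (hfun0 _ this)
  -- surjectivity
  have hsurj : ∀ y : W, ∃ x : W, (x, y) ∈ S := by
    intro y
    have : y ∈ LinearMap.range g2 := by rw [hrange2]; trivial
    obtain ⟨⟨⟨a, b⟩, hab⟩, hb⟩ := this
    exact ⟨a, by rwa [show b = y from hb] at hab⟩
  -- build the linear equivalence
  let f : W → W := fun x => (htot x).choose
  have hf : ∀ x, (x, f x) ∈ S := fun x => (htot x).choose_spec
  let F : W →ₗ[κ] W :=
    { toFun := f
      map_add' := by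
        intro a b
        refine hfun (a + b) _ _ (hf (a + b)) ?_
        have := S.add_mem (hf a) (hf b)
        simpa using this
      map_smul' := by
        intro c a
        refine hfun (c • a) _ _ (hf (c • a)) ?_
        have := S.smul_mem c (hf a)
        simpa using this }
  have hFinj : Function.Injective F := by
    intro a b hab
    have h1 : (a - b, f a - f b) ∈ S := by
      have := S.sub_mem (hf a) (hf b); simpa using this
    have h2 : f a - f b = 0 := by
      show F a - F b = 0
      rw [hab]; simp
    rw [h2] at h1
    have := hinj _ h1
    exact sub_eq_zero.1 this
  have hFsurj : Function.Surjective F := by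
    intro y
    obtain ⟨x, hx⟩ := hsurj y
    exact ⟨x, hfun x (f x) y (hf x) hx⟩
  refine ⟨LinearEquiv.ofBijective F ⟨hFinj, hFsurj⟩, ?_⟩
  intro x y
  constructor
  · intro h
    have hxy : (x, y) ∈ S := (hSmem x y).2 h
    exact hfun x (f x) y (hf x) hxy
  · intro h
    have : (x, y) ∈ S := by
      have := hf x
      rwa [show f x = y from h] at this
    exact (hSmem x y).1 this
end

section
/- For the Jordan cell representation ρ^{II}(λ,k) of G_{2m} (the regular representation with monodromy the k×k Jordan block T(λ,k) with eigenvalue λ ≠ 0), one has dim ker M(ρ^{II}(λ,k)) = dim coker M(ρ^{II}(λ,k)) = 1 if λ = 1 and = 0 if λ ≠ 1. -/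
/-- The block matrix `M(ρ)` of a `G_{2m}`-representation: it sends a family
`(v_{2i-1})_i` of odd-vertex vectors to the family `(α_i (v_{2i-1}) - β_i (v_{2i+1}))_i`
(cyclic indexing). Here `U i` models the odd vertex `V_{2i-1}` (actually `V_{2i+1}`
re-indexed by `i : Fin m`) and `W i` models the even vertex `V_{2i}`. -/
def repMap (κ : Type*) [Field κ] {m : ℕ} [NeZero m]
    (U W : Fin m → Type*) [∀ i, AddCommGroup (U i)] [∀ i, Module κ (U i)]
    [∀ i, AddCommGroup (W i)] [∀ i, Module κ (W i)]
    (α : ∀ i, U i →ₗ[κ] W i) (β : ∀ i, U (i + 1) →ₗ[κ] W i) :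
    ((∀ i, U i) →ₗ[κ] ∀ i, W i) :=
  LinearMap.pi fun i => (α i).comp (LinearMap.proj i) - (β i).comp (LinearMap.proj (i + 1))

/-- The `k × k` Jordan matrix `T(λ,k)` with eigenvalue `λ` on the diagonal and `1` on the
superdiagonal. -/
def jordanMatrix {κ : Type*} [Field κ] (lam : κ) (k : ℕ) : Matrix (Fin k) (Fin k) κ :=
  fun i j => if j = i then lam else if (j : ℕ) = (i : ℕ) + 1 then 1 else 0

lemma mem_ker_repMap_iff (κ : Type*) [Field κ] {m : ℕ} [NeZero m]
    (U W : Fin m → Type*) [∀ i, AddCommGroup (U i)] [∀ i, Module κ (U i)]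
    [∀ i, AddCommGroup (W i)] [∀ i, Module κ (W i)]
    (α : ∀ i, U i →ₗ[κ] W i) (β : ∀ i, U (i + 1) →ₗ[κ] W i) (v : ∀ i, U i) :
    v ∈ LinearMap.ker (repMap κ U W α β) ↔ ∀ i, α i (v i) = β i (v (i + 1)) := by
  simp [repMap, LinearMap.mem_ker, funext_iff, sub_eq_zero, LinearMap.pi_apply]

lemma ker_char {κ : Type*} [Field κ] {m k : ℕ} [NeZero m]
    (J : (Fin k → κ) →ₗ[κ] (Fin k → κ)) (v : Fin m → Fin k → κ)
    (h : ∀ i : Fin m, (if i = 0 then J else LinearMap.id) (v i) = v (i + 1)) :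
    J (v 0) = v 0 ∧ ∀ i, v i = v 0 := by
  have h0 : J (v 0) = v (0 + 1) := by simpa using h 0
  have hne : ∀ i : Fin m, i ≠ 0 → v (i + 1) = v i := by
    intro i hi; simpa [hi] using (h i).symm
  have hm : 0 < m := Nat.pos_of_ne_zero (NeZero.ne m)
  have claim : ∀ j : ℕ, ∀ hj : j < m, 0 < j → v ⟨j, hj⟩ = J (v 0) := by
    intro j
    induction j with
    | zero => intro _ h; exact absurd h (lt_irrefl 0)
    | succ j ih =>
      intro hj _
      rcases Nat.eq_zero_or_pos j with hj0 | hjpos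
      · subst hj0
        have : (0 : Fin m) + 1 = ⟨1, hj⟩ := by
          ext; simp [Fin.add_def, Nat.mod_eq_of_lt hj]
        rw [← this, ← h0]
      · have hjm : j < m := Nat.lt_of_succ_lt hj
        have hi : (⟨j, hjm⟩ : Fin m) ≠ 0 := Fin.ne_of_val_ne (by simp; omega)
        have : (⟨j, hjm⟩ : Fin m) + 1 = ⟨j + 1, hj⟩ := by
          ext; simp [Fin.add_def, Nat.mod_eq_of_lt hj]
        rw [← this, hne _ hi, ih hjm hjpos]
  have hJ : J (v 0) = v 0 := by
    rcases Nat.lt_or_ge m 2 with hm2 | hm2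
    · have : m = 1 := by omega
      subst this
      have : (0 : Fin 1) + 1 = 0 := rfl
      rw [h0, this]
    · have hlt : m - 1 < m := by omega
      have hi : (⟨m - 1, hlt⟩ : Fin m) ≠ 0 := Fin.ne_of_val_ne (by simp; omega)
      have hm1 : m - 1 + 1 = m := by omega
      have hplus : (⟨m - 1, hlt⟩ : Fin m) + 1 = 0 := by
        ext; simp [Fin.add_def, hm1]
      have := hne _ hi
      rw [hplus] at this
      exact ((claim (m - 1) hlt (by omega)).symm).trans this.symm
  refine ⟨hJ, fun i => ?_⟩
  rcases Nat.eq_zero_or_pos i.val with h0' | hpos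
  · have : i = 0 := Fin.ext h0'
    rw [this]
  · have : i = ⟨i.val, i.isLt⟩ := rfl
    rw [this, claim i.val i.isLt hpos, hJ]

lemma jordan_sub_one {κ : Type*} [Field κ] (lam : κ) (k : ℕ) :
    jordanMatrix lam k - 1 = jordanMatrix (lam - 1) k := by
  ext i j
  rcases eq_or_ne j i with rfl | hji
  · simp [jordanMatrix, Matrix.one_apply]
  · have hij : i ≠ j := fun h => hji h.symm
    simp [jordanMatrix, Matrix.one_apply, hji, hij]

lemma jordan_det {κ : Type*} [Field κ] (mu : κ) (k : ℕ) :
    (jordanMatrix mu k).det = mu ^ k := by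
  have hbt : (jordanMatrix mu k).BlockTriangular id := by
    intro i j hij
    simp only [id] at hij
    simp only [jordanMatrix]
    rw [if_neg (by exact fun hc => absurd hc (by simp [Fin.ext_iff]; omega)),
      if_neg (by omega)]
  rw [Matrix.det_of_upperTriangular hbt]
  simp [jordanMatrix]

lemma jordan0_mulVec {κ : Type*} [Field κ] {k : ℕ} (x : Fin k → κ) (i : Fin k) :
    (jordanMatrix (0 : κ) k).mulVec x i
      = if h : (i : ℕ) + 1 < k then x ⟨(i : ℕ) + 1, h⟩ else 0 := by
  classical
  have hentry : ∀ j : Fin k, jordanMatrix (0 : κ) k i j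
      = if ((j : ℕ) = (i : ℕ) + 1) then 1 else 0 := by
    intro j
    simp only [jordanMatrix]
    split_ifs with h1 h2 h3 <;> first | rfl | omega
  rw [Matrix.mulVec, dotProduct]
  simp_rw [hentry]
  split_ifs with h
  · rw [Finset.sum_eq_single (⟨(i : ℕ) + 1, h⟩ : Fin k)]
    · simp
    · intro j _ hj
      rw [if_neg (fun hc => hj (Fin.ext hc)), zero_mul]
    · simp
  · apply Finset.sum_eq_zero
    intro j _
    rw [if_neg (by omega), zero_mul]

lemma jordan0_mem_ker {κ : Type*} [Field κ] {k : ℕ} (x : Fin k → κ) :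
    x ∈ LinearMap.ker (jordanMatrix (0 : κ) k).mulVecLin
      ↔ ∀ j : Fin k, 0 < (j : ℕ) → x j = 0 := by
  rw [LinearMap.mem_ker]
  constructor
  · intro hx j hj
    have hx' : (jordanMatrix (0 : κ) k).mulVec x = 0 := by
      rw [← Matrix.mulVecLin_apply]; exact hx
    have hjk : (j : ℕ) - 1 < k := by omega
    have h0 := congrFun hx' ⟨(j : ℕ) - 1, hjk⟩
    rw [jordan0_mulVec] at h0
    have hlt : ((⟨(j : ℕ) - 1, hjk⟩ : Fin k) : ℕ) + 1 < k := by
      simp only []; omega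
    rw [dif_pos hlt] at h0
    have hje : (⟨((⟨(j : ℕ) - 1, hjk⟩ : Fin k) : ℕ) + 1, hlt⟩ : Fin k) = j :=
      Fin.ext (by simp only []; omega)
    rw [hje] at h0
    simpa using h0
  · intro hx
    funext i
    rw [Matrix.mulVecLin_apply, jordan0_mulVec]
    split_ifs with h
    · exact (hx _ (by simp only []; omega)).trans (by simp)
    · simp

lemma jordan0_ker_finrank (κ : Type*) [Field κ] {k : ℕ} (hk : 0 < k) :
    Module.finrank κ (LinearMap.ker (jordanMatrix (0 : κ) k).mulVecLin) = 1 := by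
  have hmem : ∀ c : κ, Pi.single (⟨0, hk⟩ : Fin k) c
      ∈ LinearMap.ker (jordanMatrix (0 : κ) k).mulVecLin := by
    intro c
    rw [jordan0_mem_ker]
    intro j hj
    exact Pi.single_eq_of_ne (M := fun _ : Fin k => κ)
      (Fin.ne_of_val_ne (show (j : ℕ) ≠ 0 by omega)) c
  let f : LinearMap.ker (jordanMatrix (0 : κ) k).mulVecLin →ₗ[κ] κ :=
    (LinearMap.proj (⟨0, hk⟩ : Fin k)).comp (LinearMap.ker _).subtype
  let g : κ →ₗ[κ] LinearMap.ker (jordanMatrix (0 : κ) k).mulVecLin :=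
    LinearMap.codRestrict _ (LinearMap.single κ (fun _ : Fin k => κ) ⟨0, hk⟩) hmem
  have h1 : f.comp g = LinearMap.id := by
    apply LinearMap.ext
    intro c
    show (Pi.single (⟨0, hk⟩ : Fin k) c : Fin k → κ) ⟨0, hk⟩ = c
    simp [f, g, LinearMap.codRestrict_apply]
  have h2 : g.comp f = LinearMap.id := by
    apply LinearMap.ext
    intro x
    apply Subtype.ext
    funext j
    simp only [LinearMap.comp_apply, LinearMap.codRestrict_apply, LinearMap.id_apply,
      LinearMap.single_apply, LinearMap.proj_apply, Submodule.subtype_apply, f, g]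
    change (Pi.single (⟨0, hk⟩ : Fin k) (x.1 ⟨0, hk⟩) : Fin k → κ) j = x.1 j
    rcases eq_or_ne j ⟨0, hk⟩ with rfl | hj
    · exact Pi.single_eq_same _ _
    · rw [Pi.single_eq_of_ne hj]
      exact ((jordan0_mem_ker x.1).mp x.2 j (by
        rcases Nat.eq_zero_or_pos (j : ℕ) with h0 | h
        · exact absurd (Fin.ext h0) hj
        · exact h)).symm
  exact (LinearEquiv.ofLinear f g h1 h2).finrank_eq.trans (Module.finrank_self κ)

/-- For the Jordan cell `G_{2m}`-representation `ρ^{II}(λ,k)` (all vertex spaces `κ^k`,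
`α₁ = T(λ,k)` the Jordan block with eigenvalue `λ ≠ 0`, all other maps the identity):
`dim ker M = dim coker M = 1` if `λ = 1` and `= 0` otherwise. -/
theorem stmt16 (κ : Type*) [Field κ] [DecidableEq κ] (m : ℕ) [NeZero m]
    (lam : κ) (hlam : lam ≠ 0) (k : ℕ) (hk : 0 < k) :
    Module.finrank κ
        (LinearMap.ker (repMap κ (fun _ : Fin m => Fin k → κ) (fun _ : Fin m => Fin k → κ)
          (fun i => if i = 0 then (jordanMatrix lam k).mulVecLin else LinearMap.id)
          (fun _ => LinearMap.id)))
      = (if lam = 1 then 1 else 0)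
    ∧ Module.finrank κ
        ((∀ _ : Fin m, Fin k → κ) ⧸
          LinearMap.range (repMap κ (fun _ : Fin m => Fin k → κ) (fun _ : Fin m => Fin k → κ)
          (fun i => if i = 0 then (jordanMatrix lam k).mulVecLin else LinearMap.id)
          (fun _ => LinearMap.id)))
      = (if lam = 1 then 1 else 0) := by
  set J : (Fin k → κ) →ₗ[κ] (Fin k → κ) := (jordanMatrix lam k).mulVecLin with hJ
  set M : (∀ _ : Fin m, Fin k → κ) →ₗ[κ] (∀ _ : Fin m, Fin k → κ) :=
    repMap κ (fun _ : Fin m => Fin k → κ) (fun _ : Fin m => Fin k → κ)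
      (fun i => if i = 0 then J else LinearMap.id) (fun _ => LinearMap.id) with hM
  -- membership characterization
  have hmemM : ∀ v, v ∈ LinearMap.ker M ↔
      ∀ i : Fin m, (if i = 0 then J else LinearMap.id) (v i) = v (i + 1) := by
    intro v
    rw [hM, mem_ker_repMap_iff]
    constructor <;> intro h i <;> simpa using h i
  -- the kernel is equivalent to ker (J - id)
  have hf : ∀ v : LinearMap.ker M, v.1 0 ∈ LinearMap.ker (J - LinearMap.id) := by
    intro v
    rw [LinearMap.mem_ker, LinearMap.sub_apply, LinearMap.id_apply, sub_eq_zero]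
    exact (ker_char J v.1 ((hmemM v.1).mp v.2)).1
  have hg : ∀ x : LinearMap.ker (J - LinearMap.id),
      (fun _ : Fin m => x.1) ∈ LinearMap.ker M := by
    intro x
    rw [hmemM]
    intro i
    have hx : J x.1 = x.1 := by
      have := x.2
      rw [LinearMap.mem_ker, LinearMap.sub_apply, LinearMap.id_apply, sub_eq_zero] at this
      exact this
    split_ifs with h <;> simp [hx]
  let f : LinearMap.ker M →ₗ[κ] LinearMap.ker (J - LinearMap.id) :=
    LinearMap.codRestrict _ ((LinearMap.proj (0 : Fin m)).comp (LinearMap.ker M).subtype) hf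
  let g : LinearMap.ker (J - LinearMap.id) →ₗ[κ] LinearMap.ker M :=
    LinearMap.codRestrict _
      ((LinearMap.pi fun _ : Fin m => LinearMap.id).comp
        (LinearMap.ker (J - LinearMap.id)).subtype) (by
          intro x
          exact hg x)
  have h1 : f.comp g = LinearMap.id := by
    apply LinearMap.ext
    intro x
    apply Subtype.ext
    rfl
  have h2 : g.comp f = LinearMap.id := by
    apply LinearMap.ext
    intro v
    apply Subtype.ext
    funext i
    simp only [LinearMap.comp_apply, LinearMap.codRestrict_apply, LinearMap.id_apply,
      LinearMap.pi_apply, LinearMap.proj_apply, Submodule.subtype_apply, f, g]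
    exact ((ker_char J v.1 ((hmemM v.1).mp v.2)).2 i).symm
  have hkereq : Module.finrank κ (LinearMap.ker M)
      = Module.finrank κ (LinearMap.ker (J - LinearMap.id)) :=
    (LinearEquiv.ofLinear f g h1 h2).finrank_eq
  -- J - id is multiplication by the Jordan matrix with eigenvalue lam - 1
  have hsub : J - LinearMap.id = (jordanMatrix (lam - 1) k).mulVecLin := by
    rw [← jordan_sub_one]
    apply LinearMap.ext
    intro x
    simp [hJ, Matrix.mulVecLin_apply, Matrix.sub_mulVec, Matrix.one_mulVec]
  have hker : Module.finrank κ (LinearMap.ker M) = (if lam = 1 then 1 else 0) := by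
    rw [hkereq, hsub]
    by_cases h1 : lam = 1
    · rw [if_pos h1, h1, sub_self]
      exact jordan0_ker_finrank κ hk
    · rw [if_neg h1]
      have hdet : IsUnit (jordanMatrix (lam - 1) k) := by
        rw [Matrix.isUnit_iff_isUnit_det, jordan_det]
        exact isUnit_iff_ne_zero.mpr (pow_ne_zero _ (sub_ne_zero.mpr h1))
      have hinj : Function.Injective (jordanMatrix (lam - 1) k).mulVecLin := by
        rw [Matrix.coe_mulVecLin]
        exact Matrix.mulVec_injective_iff_isUnit.mpr hdet
      rw [LinearMap.ker_eq_bot.mpr hinj]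
      exact finrank_bot κ _
  refine ⟨hker, ?_⟩
  have hq := Submodule.finrank_quotient_add_finrank (LinearMap.range M)
  have hr := LinearMap.finrank_range_add_finrank_ker M
  have : Module.finrank κ
      ((∀ _ : Fin m, Fin k → κ) ⧸ LinearMap.range M)
      = Module.finrank κ (LinearMap.ker M) := by omega
  rw [this, hker]
end
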